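/- arXiv:1112.3663 — 3 statements merged into one kernel-verified Lean document; each statement's English description precedes it below -/
import Mathlib

section
/- Let f be a nonnegative continuous solution of ∂_t f = f(αM₁(f)+β)(p−M₁(f)) on [0,1] with unit mass. Then M₁(t) := M₁(f(t,·)) satisfies the ODE M₁'(t) = (αM₁(t)+β)(M₂(t) − M₁(t)²), where M₂(t) = ∫₀¹ p² f(t,p)dp. -/
open MeasureTheory intervalIntegral

/-- The first moment of a nonnegative continuous unit-mass solution of the
two-strategy replicator equation satisfies
`M₁'(t) = (α M₁(t) + β)(M₂(t) − M₁(t)²)`. -/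
theorem first_moment_ode
    (α β : ℝ) (f : ℝ → ℝ → ℝ) (M₁ M₂ : ℝ → ℝ)
    (hcont : Continuous fun q : ℝ × ℝ => f q.1 q.2)
    (hnonneg : ∀ t, ∀ p ∈ Set.Icc (0:ℝ) 1, 0 ≤ f t p)
    (hmass : ∀ t, (∫ p in (0:ℝ)..1, f t p) = 1)
    (hM₁ : ∀ t, M₁ t = ∫ p in (0:ℝ)..1, p * f t p)
    (hM₂ : ∀ t, M₂ t = ∫ p in (0:ℝ)..1, p ^ 2 * f t p)
    (hode : ∀ t, ∀ p ∈ Set.Icc (0:ℝ) 1,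
      HasDerivAt (fun s => f s p)
        (f t p * ((α * M₁ t + β) * (p - M₁ t))) t) :
    ∀ t, HasDerivAt M₁ ((α * M₁ t + β) * (M₂ t - (M₁ t) ^ 2)) t := by
  -- continuity in p for each fixed t
  have hcontp : ∀ t, Continuous fun p => f t p := fun t =>
    hcont.comp (Continuous.prodMk_right t)
  have hint : ∀ t, IntervalIntegrable (fun p => f t p) volume 0 1 :=
    fun t => (hcontp t).intervalIntegrable 0 1
  have hintp : ∀ t, IntervalIntegrable (fun p => p * f t p) volume 0 1 :=
    fun t => (continuous_id.mul (hcontp t)).intervalIntegrable 0 1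
  -- M₁ is between 0 and 1
  have hM₁mem : ∀ t, M₁ t ∈ Set.Icc (0:ℝ) 1 := by
    intro t
    constructor
    · rw [hM₁ t]
      apply intervalIntegral.integral_nonneg (by norm_num)
      intro p hp
      exact mul_nonneg hp.1 (hnonneg t p hp)
    · rw [hM₁ t]
      refine le_trans ?_ (hmass t).le
      apply intervalIntegral.integral_mono_on (by norm_num) (hintp t) (hint t)
      intro p hp
      calc p * f t p ≤ 1 * f t p := by
            exact mul_le_mul_of_nonneg_right hp.2 (hnonneg t p hp)
        _ = f t p := one_mul _
  intro t₀
  -- bound f on a compact neighborhood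
  obtain ⟨C, hC⟩ : ∃ C, ∀ q ∈ (Set.Icc (t₀ - 1) (t₀ + 1) ×ˢ Set.Icc (0:ℝ) 1),
      ‖f q.1 q.2‖ ≤ C :=
    (isCompact_Icc.prod isCompact_Icc).exists_bound_of_continuousOn hcont.continuousOn
  -- apply differentiation under the integral sign
  have key := intervalIntegral.hasDerivAt_integral_of_dominated_loc_of_deriv_le
    (F := fun x p => p * f x p)
    (F' := fun x p => p * (f x p * ((α * M₁ x + β) * (p - M₁ x))))
    (x₀ := t₀) (a := 0) (b := 1) (μ := volume)
    (bound := fun _ => C * ((|α| + |β|) * 2))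
    (Metric.ball_mem_nhds t₀ (by norm_num : (0:ℝ) < 1))
    (Filter.Eventually.of_forall fun x =>
      ((continuous_id.mul (hcontp x)).aestronglyMeasurable))
    (hintp t₀)
    (Continuous.aestronglyMeasurable (by continuity))
    ?_ (intervalIntegrable_const) ?_
  · have hIcc : Set.uIoc (0:ℝ) 1 ⊆ Set.Icc 0 1 := by
      rw [Set.uIoc_of_le (by norm_num : (0:ℝ) ≤ 1)]
      exact Set.Ioc_subset_Icc_self
    -- compute the derivative integral
    have hval : (∫ p in (0:ℝ)..1, p * (f t₀ p * ((α * M₁ t₀ + β) * (p - M₁ t₀))))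
        = (α * M₁ t₀ + β) * (M₂ t₀ - (M₁ t₀) ^ 2) := by
      have heq : (fun p => p * (f t₀ p * ((α * M₁ t₀ + β) * (p - M₁ t₀))))
          = fun p => (α * M₁ t₀ + β) * (p ^ 2 * f t₀ p)
            - ((α * M₁ t₀ + β) * M₁ t₀) * (p * f t₀ p) := by
        funext p; ring
      have hint2 : IntervalIntegrable (fun p => p ^ 2 * f t₀ p) volume 0 1 :=
        ((continuous_pow 2).mul (hcontp t₀)).intervalIntegrable 0 1
      rw [heq, intervalIntegral.integral_sub
          ((hint2.const_mul _)) ((hintp t₀).const_mul _),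
        intervalIntegral.integral_const_mul, intervalIntegral.integral_const_mul,
        ← hM₂ t₀, ← hM₁ t₀]
      ring
    have hk : HasDerivAt (fun x => ∫ p in (0:ℝ)..1, p * f x p)
        ((α * M₁ t₀ + β) * (M₂ t₀ - (M₁ t₀) ^ 2)) t₀ := by
      have hk0 := key.2
      beta_reduce at hk0
      rwa [hval] at hk0
    exact hk.congr_of_eventuallyEq (Filter.Eventually.of_forall hM₁)
  · -- bound on the derivative
    refine Filter.Eventually.of_forall fun p hp x hx => ?_
    rw [Set.uIoc_of_le (by norm_num : (0:ℝ) ≤ 1)] at hp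
    have hpIcc : p ∈ Set.Icc (0:ℝ) 1 := ⟨le_of_lt hp.1, hp.2⟩
    have hxI : x ∈ Set.Icc (t₀ - 1) (t₀ + 1) := by
      rw [Metric.mem_ball, Real.dist_eq, abs_lt] at hx
      constructor <;> linarith [hx.1, hx.2]
    have hfC : |f x p| ≤ C := hC (x, p) ⟨hxI, hpIcc⟩
    have hC0 : (0:ℝ) ≤ C := le_trans (abs_nonneg _) hfC
    have hm := hM₁mem x
    have h1 : |α * M₁ x + β| ≤ |α| + |β| := by
      calc |α * M₁ x + β| ≤ |α * M₁ x| + |β| := abs_add_le _ _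
        _ ≤ |α| + |β| := by
            have : |α * M₁ x| = |α| * |M₁ x| := abs_mul _ _
            have hmx : |M₁ x| ≤ 1 := abs_le.mpr ⟨by linarith [hm.1], hm.2⟩
            nlinarith [abs_nonneg α, abs_nonneg (M₁ x)]
    have h2 : |p - M₁ x| ≤ 2 := by
      rw [abs_le]
      constructor <;> [linarith [hpIcc.1, hm.2]; linarith [hpIcc.2, hm.1]]
    have h3 : |p| ≤ 1 := abs_le.mpr ⟨by linarith [hpIcc.1], hpIcc.2⟩
    calc ‖p * (f x p * ((α * M₁ x + β) * (p - M₁ x)))‖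
        = |p| * (|f x p| * (|α * M₁ x + β| * |p - M₁ x|)) := by
          simp [abs_mul]
      _ ≤ 1 * (C * ((|α| + |β|) * 2)) := by
          refine mul_le_mul h3 ?_ (by positivity) zero_le_one
          refine mul_le_mul hfC ?_ (by positivity) hC0
          exact mul_le_mul h1 h2 (abs_nonneg _) (by positivity)
      _ = C * ((|α| + |β|) * 2) := one_mul _
  · -- the pointwise ODE
    refine Filter.Eventually.of_forall fun p hp x _ => ?_
    rw [Set.uIoc_of_le (by norm_num : (0:ℝ) ≤ 1)] at hp
    exact (hode x p ⟨le_of_lt hp.1, hp.2⟩).const_mul p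
end

section
/- If f̄ is a probability density on [0,1] which is continuous and strictly positive on a nonempty open subinterval, then its variance M₂(f̄) − M₁(f̄)² is strictly positive; consequently there is no continuous stationary solution with M₁ = −β/α ∈ (0,1) for which the linearized perturbation moment M₁(g)(t) = M₁(g)(0)·e^{t·N₁(f̄)} remains bounded for all initial perturbations. -/
open MeasureTheory intervalIntegral

/-- A probability density on `[0,1]` which is continuous and strictly positive on a
nonempty open subinterval has strictly positive variance; consequently for a Type I
stationary state the linearized perturbation moment `c·e^{t N₁}` cannot remain
bounded for every initial perturbation value `c`. -/
theorem no_linearly_stable_continuous_stationary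
    (fbar : ℝ → ℝ)
    (hnonneg : ∀ p ∈ Set.Icc (0:ℝ) 1, 0 ≤ fbar p)
    (hint : IntervalIntegrable fbar volume 0 1)
    (hmass : (∫ p in (0:ℝ)..1, fbar p) = 1)
    (a b : ℝ) (hab : a < b) (hsub : Set.Ioo a b ⊆ Set.Icc (0:ℝ) 1)
    (hcont : ContinuousOn fbar (Set.Ioo a b))
    (hposf : ∀ p ∈ Set.Ioo a b, 0 < fbar p)
    (N₁ : ℝ)
    (hN₁ : N₁ = (∫ p in (0:ℝ)..1, p ^ 2 * fbar p) -
      (∫ p in (0:ℝ)..1, p * fbar p) ^ 2) :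
    0 < N₁ ∧
      ∃ c : ℝ, ¬ BddAbove ((fun t : ℝ => c * Real.exp (t * N₁)) '' Set.Ici 0) := by
  -- boundary facts
  have ha0 : 0 ≤ a := by
    by_contra h
    push_neg at h
    have h1 : min 0 b ≤ 0 := min_le_left _ _
    have h3 : a < min 0 b := lt_min (by linarith) hab
    have hx : (a + min 0 b) / 2 ∈ Set.Ioo a b := by
      constructor
      · linarith
      · have h2 : min 0 b ≤ b := min_le_right _ _
        linarith
    have := (hsub hx).1
    linarith
  have hb1 : b ≤ 1 := by
    by_contra h
    push_neg at h
    have h1 : 1 ≤ max 1 a := le_max_left _ _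
    have h3 : max 1 a < b := max_lt h hab
    have hx : (max 1 a + b) / 2 ∈ Set.Ioo a b := by
      constructor
      · have h2 : a ≤ max 1 a := le_max_right _ _
        linarith
      · linarith
    have := (hsub hx).2
    linarith
  have huIcc : Set.uIcc (0:ℝ) 1 = Set.Icc 0 1 := Set.uIcc_of_le (by norm_num)
  set m := ∫ p in (0:ℝ)..1, p * fbar p with hm
  -- integrability
  have h1 : IntervalIntegrable (fun p => p * fbar p) volume 0 1 :=
    hint.continuousOn_mul (continuous_id.continuousOn)
  have h2 : IntervalIntegrable (fun p => p ^ 2 * fbar p) volume 0 1 :=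
    hint.continuousOn_mul ((continuous_pow 2).continuousOn)
  have hq : IntervalIntegrable (fun p => (p - m) ^ 2 * fbar p) volume 0 1 :=
    hint.continuousOn_mul (by fun_prop)
  -- variance identity
  have key : (∫ p in (0:ℝ)..1, (p - m) ^ 2 * fbar p) = N₁ := by
    have heq : ∀ p, (p - m) ^ 2 * fbar p
        = (p ^ 2 * fbar p - 2 * m * (p * fbar p)) + m ^ 2 * fbar p := by
      intro p; ring
    rw [hN₁]
    calc (∫ p in (0:ℝ)..1, (p - m) ^ 2 * fbar p)
        = ∫ p in (0:ℝ)..1,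
            ((p ^ 2 * fbar p - 2 * m * (p * fbar p)) + m ^ 2 * fbar p) := by
          simp only [heq]
      _ = ((∫ p in (0:ℝ)..1, p ^ 2 * fbar p)
            - 2 * m * ∫ p in (0:ℝ)..1, p * fbar p)
            + m ^ 2 * ∫ p in (0:ℝ)..1, fbar p := by
          rw [intervalIntegral.integral_add (h2.sub (h1.const_mul _))
              (hint.const_mul _), intervalIntegral.integral_sub h2 (h1.const_mul _),
            intervalIntegral.integral_const_mul, intervalIntegral.integral_const_mul]
      _ = (∫ p in (0:ℝ)..1, p ^ 2 * fbar p)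
            - (∫ p in (0:ℝ)..1, p * fbar p) ^ 2 := by
          rw [hmass, ← hm]; ring
  -- positivity of the variance
  set c := (a + b) / 2 with hc
  have hac : a < c := by simp only [hc]; linarith
  have hcb : c < b := by simp only [hc]; linarith
  have hposvar : 0 < N₁ := by
    rw [← key]
    obtain ⟨a', b', ha'b', ha'0, hb'1, hsub', hmout⟩ :
        ∃ a' b', a' < b' ∧ 0 ≤ a' ∧ b' ≤ 1 ∧ Set.Ioo a' b' ⊆ Set.Ioo a b ∧
          ∀ p ∈ Set.Ioo a' b', p ≠ m := by
      rcases le_or_gt c m with hmc | hmc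
      · exact ⟨a, c, hac, ha0, by linarith, Set.Ioo_subset_Ioo le_rfl hcb.le,
          fun p hp => ne_of_lt (lt_of_lt_of_le hp.2 hmc)⟩
      · exact ⟨c, b, hcb, by linarith, hb1, Set.Ioo_subset_Ioo hac.le le_rfl,
          fun p hp => ne_of_gt (lt_trans hmc hp.1)⟩
    have hq' : IntervalIntegrable (fun p => (p - m) ^ 2 * fbar p) volume a' b' :=
      hq.mono_set (by rw [huIcc, Set.uIcc_of_le ha'b'.le]
                      exact Set.Icc_subset_Icc ha'0 hb'1)
    have hpos' : 0 < ∫ p in a'..b', (p - m) ^ 2 * fbar p := by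
      apply intervalIntegral.intervalIntegral_pos_of_pos_on hq' _ ha'b'
      intro p hp
      have h1 : 0 < fbar p := hposf p (hsub' hp)
      have h2 : p ≠ m := hmout p hp
      have h3 : 0 < (p - m) ^ 2 := sq_pos_of_ne_zero (sub_ne_zero.mpr h2)
      exact mul_pos h3 h1
    refine lt_of_lt_of_le hpos' ?_
    apply intervalIntegral.integral_mono_interval ha'0 ha'b'.le hb'1 _ hq
    filter_upwards [ae_restrict_mem measurableSet_Ioc] with p hp
    have h1 : 0 ≤ fbar p := hnonneg p ⟨hp.1.le, hp.2⟩
    positivity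
  refine ⟨hposvar, 1, ?_⟩
  rintro ⟨M, hM⟩
  set t := (|M| + 1) / N₁ with ht
  have htn : 0 ≤ t := div_nonneg (by positivity) hposvar.le
  have hmem : 1 * Real.exp (t * N₁) ∈
      (fun t : ℝ => 1 * Real.exp (t * N₁)) '' Set.Ici 0 := ⟨t, htn, rfl⟩
  have hub := hM hmem
  have htmul : t * N₁ = |M| + 1 := div_mul_cancel₀ _ (ne_of_gt hposvar)
  have h4 := Real.add_one_le_exp (t * N₁)
  have h5 := le_abs_self M
  rw [htmul] at h4 hub
  linarith
end

section
/- The quadratic Hawk–Dove stationary solution f₀(p) = −p² + (2/3)p + 1 has strictly positive variance: M₂(f₀) − M₁(f₀)² = ∫₀¹ (−p³ + (2/3)p² + p)(p − 17/36) dp > 0 (its value is approximately 0.07). Consequently f₀ is not linearly stable. -/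
open intervalIntegral

lemma poly_int (c4 c3 c2 c1 c0 : ℝ) :
    ∫ p in (0:ℝ)..1, (c4*p^4 + (c3*p^3 + (c2*p^2 + (c1*p^1 + c0*p^0)))) =
      c4/5 + c3/4 + c2/3 + c1/2 + c0 := by
  have I : ∀ f : ℝ → ℝ, Continuous f → IntervalIntegrable f MeasureTheory.volume 0 1 :=
    fun f hf => hf.intervalIntegrable 0 1
  rw [integral_add (I _ (by continuity)) (I _ (by continuity)),
     integral_add (I _ (by continuity)) (I _ (by continuity)),
     integral_add (I _ (by continuity)) (I _ (by continuity)),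
     integral_add (I _ (by continuity)) (I _ (by continuity))]
  simp only [integral_const_mul, integral_pow, integral_id, integral_const]
  ring

/-- The Hawk–Dove quadratic stationary solution `f₀(p) = −p² + (2/3)p + 1` has
strictly positive variance:
`M₂(f₀) − M₁(f₀)² = ∫₀¹ (−p³ + (2/3)p² + p)(p − 17/36) dp > 0`. -/
theorem hawk_dove_quadratic_positive_variance :
    let f₀ : ℝ → ℝ := fun p => -p ^ 2 + (2 / 3) * p + 1
    (∫ p in (0:ℝ)..1, p ^ 2 * f₀ p) - (∫ p in (0:ℝ)..1, p * f₀ p) ^ 2 =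
      (∫ p in (0:ℝ)..1, (-p ^ 3 + (2 / 3) * p ^ 2 + p) * (p - 17 / 36)) ∧
    0 < ∫ p in (0:ℝ)..1, (-p ^ 3 + (2 / 3) * p ^ 2 + p) * (p - 17 / 36) := by
  intro f₀
  have e1 : (∫ p in (0:ℝ)..1, p ^ 2 * f₀ p) =
      (-1)/5 + (2/3)/4 + 1/3 + 0/2 + 0 := by
    rw [← poly_int (-1) (2/3) 1 0 0]
    apply intervalIntegral.integral_congr; intro p _; simp only [f₀]; ring
  have e2 : (∫ p in (0:ℝ)..1, p * f₀ p) =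
      0/5 + (-1)/4 + (2/3)/3 + 1/2 + 0 := by
    rw [← poly_int 0 (-1) (2/3) 1 0]
    apply intervalIntegral.integral_congr; intro p _; simp only [f₀]; ring
  have e3 : (∫ p in (0:ℝ)..1, (-p ^ 3 + (2 / 3) * p ^ 2 + p) * (p - 17 / 36)) =
      (-1)/5 + (17/36 + 2/3)/4 + (1 - (2/3)*(17/36))/3 + (-(17/36))/2 + 0 := by
    rw [← poly_int (-1) (17/36 + 2/3) (1 - (2/3)*(17/36)) (-(17/36)) 0]
    apply intervalIntegral.integral_congr; intro p _; ring
  rw [e1, e2, e3]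
  norm_num
end
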